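/- Let R satisfy the five-element avoidance condition and 2 ∈ R*, let μ : P(M) → P(M′) be a harmonicity preserver, and let (e₀,e₁), (e₀′,e₁′) be bases of M, M′ with μ(Re₀)=R′e₀′, μ(Re₁)=R′e₁′, μ(R(e₀±e₁))=R′(e₀′±e₁′). Then there is a unique map β : R → R′ with μ(R(x e₀ + e₁)) = R′(x^β e₀′ + e₁′) for all x ∈ R; this β is additive, satisfies 1^β = 1, and ((x+y)/2)^β = (x^β + y^β)/2 whenever x − y ∈ R*. -/

import Mathlib

/-- Harmonic quadruple of points of the projective line over `M`. -/
def Harm (R M : Type*) [Ring R] [AddCommGroup M] [Module R M]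
    (p₀ p₁ p₂ p₃ : Submodule R M) : Prop :=
  ∃ g : Module.Basis (Fin 2) R M,
    p₀ = Submodule.span R {g 0} ∧ p₁ = Submodule.span R {g 1} ∧
    p₂ = Submodule.span R {g 0 + g 1} ∧ p₃ = Submodule.span R {g 0 - g 1}


section
variable {A N : Type*} [Ring A] [AddCommGroup N] [Module A N]

lemma span_unit_smul {c : A} (hc : IsUnit c) (v : N) :
    Submodule.span A {c • v} = Submodule.span A {v} := by
  apply le_antisymm
  · rw [Submodule.span_singleton_le_iff_mem]
    exact Submodule.smul_mem _ c (Submodule.mem_span_singleton_self v)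
  · rw [Submodule.span_singleton_le_iff_mem, Submodule.mem_span_singleton]
    exact ⟨↑hc.unit⁻¹, by rw [smul_smul, IsUnit.val_inv_mul, one_smul]⟩

variable (f : Module.Basis (Fin 2) A N)

lemma coeffs {a b c d : A} (h : a • f 0 + b • f 1 = c • f 0 + d • f 1) :
    a = c ∧ b = d := by
  constructor
  · have := congrArg (fun v => f.repr v 0) h
    simpa [Finsupp.single_apply] using this
  · have := congrArg (fun v => f.repr v 1) h
    simpa [Finsupp.single_apply] using this

lemma cancel_aff {a r : A} (h : r • (a • f 0 + f 1) = a • f 0 + f 1) : r = 1 := by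
  have := congrArg (fun v => f.repr v 1) h
  simpa [Finsupp.single_apply] using this

lemma basis_cancel {r : A} (i : Fin 2) (h : r • f i = f i) : r = 1 := by
  have := congrArg (fun v => f.repr v i) h
  simpa using this

end

section
variable {A N : Type*} [Ring A] [AddCommGroup N] [Module A N] (f : Module.Basis (Fin 2) A N)

lemma comb_eq (p q p' q' r' s' : A) (h5 : p * p' + q * r' = 1) (h6 : p * q' + q * s' = 0) :
    p • (p' • f 0 + q' • f 1) + q • (r' • f 0 + s' • f 1) = f 0 := by
  rw [smul_add, smul_add, smul_smul, smul_smul, smul_smul, smul_smul]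
  have : (p*p') • f 0 + (p*q') • f 1 + ((q*r') • f 0 + (q*s') • f 1)
      = (p*p' + q*r') • f 0 + (p*q' + q*s') • f 1 := by
    rw [add_smul, add_smul]; abel
  rw [this, h5, h6, one_smul, zero_smul, add_zero]

lemma comb_eq' (p q p' q' r' s' : A) (h7 : p * p' + q * r' = 0) (h8 : p * q' + q * s' = 1) :
    p • (p' • f 0 + q' • f 1) + q • (r' • f 0 + s' • f 1) = f 1 := by
  rw [smul_add, smul_add, smul_smul, smul_smul, smul_smul, smul_smul]
  have : (p*p') • f 0 + (p*q') • f 1 + ((q*r') • f 0 + (q*s') • f 1)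
      = (p*p' + q*r') • f 0 + (p*q' + q*s') • f 1 := by
    rw [add_smul, add_smul]; abel
  rw [this, h7, h8, one_smul, zero_smul, zero_add]

lemma exists_basis (p q r s p' q' r' s' : A)
    (h1 : p' * p + q' * r = 1) (h2 : p' * q + q' * s = 0)
    (h3 : r' * p + s' * r = 0) (h4 : r' * q + s' * s = 1)
    (h5 : p * p' + q * r' = 1) (h6 : p * q' + q * s' = 0)
    (h7 : r * p' + s * r' = 0) (h8 : r * q' + s * s' = 1) :
    ∃ g : Module.Basis (Fin 2) A N, g 0 = p • f 0 + q • f 1 ∧ g 1 = r • f 0 + s • f 1 := by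
  set v : Fin 2 → N := ![p • f 0 + q • f 1, r • f 0 + s • f 1] with hv
  set w : Fin 2 → N := ![p' • f 0 + q' • f 1, r' • f 0 + s' • f 1] with hw
  set F : N →ₗ[A] N := f.constr ℕ v with hF
  set G : N →ₗ[A] N := f.constr ℕ w with hG
  have hFG : F.comp G = LinearMap.id := by
    apply f.ext
    intro i
    fin_cases i <;>
      simp only [LinearMap.comp_apply, LinearMap.id_apply, hF, hG, Module.Basis.constr_basis,
        hv, hw, Matrix.cons_val_zero, Matrix.cons_val_one, Matrix.head_cons, map_add,
        map_smul, Fin.isValue, Fin.zero_eta, Fin.mk_one]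
    · exact comb_eq f p' q' p q r s h1 h2
    · exact comb_eq' f r' s' p q r s h3 h4
  have hGF : G.comp F = LinearMap.id := by
    apply f.ext
    intro i
    fin_cases i <;>
      simp only [LinearMap.comp_apply, LinearMap.id_apply, hF, hG, Module.Basis.constr_basis,
        hv, hw, Matrix.cons_val_zero, Matrix.cons_val_one, Matrix.head_cons, map_add,
        map_smul, Fin.isValue, Fin.zero_eta, Fin.mk_one]
    · exact comb_eq f p q p' q' r' s' h5 h6
    · exact comb_eq' f r s p' q' r' s' h7 h8
  refine ⟨f.map (LinearEquiv.ofLinear F G hFG hGF), ?_, ?_⟩ <;>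
    simp [Module.Basis.map_apply, LinearEquiv.ofLinear_apply, hF, Module.Basis.constr_basis, hv]

end
section
variable {A N : Type*} [Ring A] [AddCommGroup N] [Module A N] (f : Module.Basis (Fin 2) A N)

/-- The standard harmonic quadruple `(∞, p(y), p(y+c), p(y-c))` for a unit `c`. -/
lemma harm_std (y : A) {c : A} (hc : IsUnit c) :
    Harm A N (Submodule.span A {f 0}) (Submodule.span A {y • f 0 + f 1})
      (Submodule.span A {(y + c) • f 0 + f 1}) (Submodule.span A {(y - c) • f 0 + f 1}) := by
  obtain ⟨g, hg0, hg1⟩ := exists_basis f c 0 y 1 ↑hc.unit⁻¹ 0 (-(y * ↑hc.unit⁻¹)) 1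
    (by simp [IsUnit.val_inv_mul]) (by simp) (by simp [mul_assoc, IsUnit.val_inv_mul])
    (by simp) (by simp [IsUnit.mul_val_inv]) (by simp) (by simp) (by simp)
  rw [zero_smul, add_zero] at hg0
  rw [one_smul] at hg1
  refine ⟨g, ?_, ?_, ?_, ?_⟩
  · rw [hg0, span_unit_smul hc]
  · rw [hg1]
  · rw [hg0, hg1]
    congr 1
    rw [add_smul]
    abel
  · rw [hg0, hg1]
    have : g 0 - g 1 = (-1 : A) • ((y - c) • f 0 + f 1) := by
      rw [hg0, hg1, neg_smul, one_smul, sub_smul]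
      abel
    rw [← hg0, ← hg1, this, span_unit_smul (by simp)]

/-- Recognition: a harmonic quadruple starting with `(∞, p(y'))` has the form
`(∞, p(y'), p(y'+d), p(y'-d))` for some unit `d`. -/
lemma harm_rec (y' : A) {q₂ q₃ : Submodule A N}
    (h : Harm A N (Submodule.span A {f 0}) (Submodule.span A {y' • f 0 + f 1}) q₂ q₃) :
    ∃ d : A, IsUnit d ∧ q₂ = Submodule.span A {(y' + d) • f 0 + f 1} ∧
      q₃ = Submodule.span A {(y' - d) • f 0 + f 1} := by
  obtain ⟨g, h0, h1, hq2, hq3⟩ := h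
  obtain ⟨s, hs⟩ := Submodule.mem_span_singleton.mp
    (h0 ▸ Submodule.mem_span_singleton_self (g 0))
  obtain ⟨s', hs'⟩ := Submodule.mem_span_singleton.mp
    (h0.symm ▸ Submodule.mem_span_singleton_self (f 0))
  obtain ⟨t, ht⟩ := Submodule.mem_span_singleton.mp
    (h1 ▸ Submodule.mem_span_singleton_self (g 1))
  obtain ⟨t', ht'⟩ := Submodule.mem_span_singleton.mp
    (h1.symm ▸ Submodule.mem_span_singleton_self (y' • f 0 + f 1))
  have hss' : s * s' = 1 := basis_cancel g 0 (by rw [mul_smul, hs', hs])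
  have hs's : s' * s = 1 := basis_cancel f 0 (by rw [mul_smul, hs, hs'])
  have htt' : t * t' = 1 := basis_cancel g 1 (by rw [mul_smul, ht', ht])
  have ht't : t' * t = 1 := cancel_aff f (by rw [mul_smul, ht, ht'])
  have hut : IsUnit t := ⟨⟨t, t', htt', ht't⟩, rfl⟩
  refine ⟨t' * s, ⟨⟨t' * s, s' * t, ?_, ?_⟩, rfl⟩, ?_, ?_⟩
  · rw [mul_assoc, ← mul_assoc s s', hss', one_mul, ht't]
  · rw [mul_assoc, ← mul_assoc t t', htt', one_mul, hs's]
  · rw [hq2]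
    have : g 0 + g 1 = t • ((y' + t' * s) • f 0 + f 1) := by
      rw [← hs, ← ht, smul_add, smul_add, smul_smul, smul_smul, mul_add,
        ← mul_assoc, htt', one_mul, add_smul]
      abel
    rw [this, span_unit_smul hut]
  · rw [hq3]
    have : g 0 - g 1 = (-t) • ((y' - t' * s) • f 0 + f 1) := by
      rw [← hs, ← ht, smul_add, smul_add, smul_smul, smul_smul, neg_mul, mul_sub,
        ← mul_assoc, htt', one_mul, neg_sub, sub_smul, neg_smul]
      abel
    rw [this, span_unit_smul hut.neg]

end

/-- Lemma 2: under conditions (i) (five-element avoidance) and (ii) (`2 ∈ R*`),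
a harmonicity preserver `μ` that matches the bases `(e₀,e₁)` and `(e₀',e₁')`
harmonically admits a unique local coordinate representation `β : R → R'` with
`μ(R(xe₀+e₁)) = R'(x^β e₀'+e₁')`; this `β` is additive, unital, and satisfies
`((x+y)/2)^β = (x^β+y^β)/2` whenever `x - y ∈ R*`. -/
theorem local_coordinate_representation
    (R M R' M' : Type*) [Ring R] [AddCommGroup M] [Module R M]
    [Ring R'] [AddCommGroup M'] [Module R' M']
    (hfive : ∀ x₁ x₂ x₃ x₄ x₅ : R, ∃ x : R, IsUnit (x - x₁) ∧ IsUnit (x - x₂) ∧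
      IsUnit (x - x₃) ∧ IsUnit (x - x₄) ∧ IsUnit (x - x₅))
    (h2 : IsUnit (2 : R))
    (e : Module.Basis (Fin 2) R M) (e' : Module.Basis (Fin 2) R' M')
    (μ : Submodule R M → Submodule R' M')
    (hμ : ∀ p₀ p₁ p₂ p₃ : Submodule R M,
      Harm R M p₀ p₁ p₂ p₃ → Harm R' M' (μ p₀) (μ p₁) (μ p₂) (μ p₃))
    (he₀ : μ (Submodule.span R {e 0}) = Submodule.span R' {e' 0})
    (he₁ : μ (Submodule.span R {e 1}) = Submodule.span R' {e' 1})
    (hplus : μ (Submodule.span R {e 0 + e 1}) = Submodule.span R' {e' 0 + e' 1})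
    (hminus : μ (Submodule.span R {e 0 - e 1}) = Submodule.span R' {e' 0 - e' 1}) :
    ∃ β : R → R',
      (∀ x : R, μ (Submodule.span R {x • e 0 + e 1}) =
        Submodule.span R' {β x • e' 0 + e' 1}) ∧
      (∀ γ : R → R', (∀ x : R, μ (Submodule.span R {x • e 0 + e 1}) =
        Submodule.span R' {γ x • e' 0 + e' 1}) → γ = β) ∧
      (∀ x y : R, β (x + y) = β x + β y) ∧ β 1 = 1 ∧
      (∀ x y : R, IsUnit (x - y) →
        (2 : R') * β (Ring.inverse (2 : R) * (x + y)) = β x + β y) := by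
  have h2i₁ : (2 : R) * Ring.inverse (2 : R) = 1 := Ring.mul_inverse_cancel _ h2
  have h2i₂ : Ring.inverse (2 : R) * 2 = 1 := Ring.inverse_mul_cancel _ h2
  have hiu : IsUnit (Ring.inverse (2 : R)) := ⟨⟨Ring.inverse 2, 2, h2i₂, h2i₁⟩, rfl⟩
  -- the key step lemma
  have CL : ∀ y c : R, IsUnit c → ∀ y' : R',
      μ (Submodule.span R {y • e 0 + e 1}) = Submodule.span R' {y' • e' 0 + e' 1} →
      ∃ d : R', IsUnit d ∧
        μ (Submodule.span R {(y + c) • e 0 + e 1}) =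
          Submodule.span R' {(y' + d) • e' 0 + e' 1} ∧
        μ (Submodule.span R {(y - c) • e 0 + e 1}) =
          Submodule.span R' {(y' - d) • e' 0 + e' 1} := by
    intro y c hc y' hy
    have h := hμ _ _ _ _ (harm_std e y hc)
    rw [he₀, hy] at h
    exact harm_rec e' y' h
  have hp0 : μ (Submodule.span R {(0 : R) • e 0 + e 1}) =
      Submodule.span R' {(0 : R') • e' 0 + e' 1} := by
    simp only [zero_smul, zero_add]; exact he₁
  have exi : ∀ x : R, ∃ x' : R',
      μ (Submodule.span R {x • e 0 + e 1}) = Submodule.span R' {x' • e' 0 + e' 1} := by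
    intro x
    obtain ⟨c, hc0, hcx, -, -, -⟩ := hfive 0 x 0 0 0
    rw [sub_zero] at hc0
    obtain ⟨d, -, hd, -⟩ := CL 0 c hc0 0 hp0
    rw [zero_add, zero_add] at hd
    have hxc : IsUnit (x - c) := by rw [← neg_sub]; exact hcx.neg
    obtain ⟨d₂, -, hd₂, -⟩ := CL c (x - c) hxc d hd
    have hcc : c + (x - c) = x := by abel
    rw [hcc] at hd₂
    exact ⟨d + d₂, hd₂⟩
  choose β hβ using exi
  have inj : ∀ a b : R', Submodule.span R' {a • e' 0 + e' 1} =
      Submodule.span R' {b • e' 0 + e' 1} → a = b := by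
    intro a b h
    obtain ⟨r, hr⟩ := Submodule.mem_span_singleton.mp
      (h ▸ Submodule.mem_span_singleton_self (b • e' 0 + e' 1))
    rw [smul_add, smul_smul] at hr
    have hr' : (r * a) • e' 0 + r • e' 1 = b • e' 0 + (1 : R') • e' 1 := by
      rw [one_smul]; exact hr
    obtain ⟨h₁, h₂⟩ := coeffs e' hr'
    rw [h₂, one_mul] at h₁
    exact h₁
  have β0 : β 0 = 0 := inj _ _ (by rw [← hβ 0, hp0])
  have β1 : β 1 = 1 := inj _ _ (by rw [← hβ 1]; simp only [one_smul]; exact hplus)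
  have hrefl : ∀ y c : R, IsUnit c → β (y + c) + β (y - c) = β y + β y := by
    intro y c hc
    obtain ⟨d, -, hA, hB⟩ := CL y c hc (β y) (hβ y)
    have eA : β (y + c) = β y + d := inj _ _ (by rw [← hβ (y + c), hA])
    have eB : β (y - c) = β y - d := inj _ _ (by rw [← hβ (y - c), hB])
    rw [eA, eB]; abel
  have fifth : ∀ x y : R, IsUnit (x - y) →
      (2 : R') * β (Ring.inverse (2 : R) * (x + y)) = β x + β y := by
    intro x y hxy
    set m := Ring.inverse (2 : R) * (x + y) with hm
    have hm1 : m - x = Ring.inverse (2 : R) * (y - x) := by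
      have hx : x = Ring.inverse (2 : R) * (2 * x) := by rw [← mul_assoc, h2i₂, one_mul]
      calc m - x = Ring.inverse (2 : R) * (x + y) - Ring.inverse (2 : R) * (2 * x) := by
            rw [hm, ← hx]
        _ = Ring.inverse (2 : R) * ((x + y) - 2 * x) := by rw [mul_sub]
        _ = Ring.inverse (2 : R) * (y - x) := by congr 1; rw [two_mul]; abel
    have hyx : IsUnit (y - x) := by rw [← neg_sub]; exact hxy.neg
    have hmu : IsUnit (m - x) := by rw [hm1]; exact hiu.mul hyx
    have key := hrefl m (m - x) hmu
    rw [sub_sub_cancel] at key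
    have hmm : m + (m - x) = y := by
      have h2m : m + m = x + y := by
        rw [hm, ← two_mul, ← mul_assoc, h2i₁, one_mul]
      calc m + (m - x) = (m + m) - x := by abel
        _ = (x + y) - x := by rw [h2m]
        _ = y := by abel
    rw [hmm] at key
    rw [two_mul, ← key]
    abel
  have hadd : ∀ x y : R, β (x + y) = β x + β y := by
    intro x y
    have hy2 : Ring.inverse (2 : R) * y + Ring.inverse (2 : R) * y = y := by
      rw [← two_mul, ← mul_assoc, h2i₁, one_mul]
    obtain ⟨a, h₁, h₂, h₃, h₄, -⟩ := hfive x (x + Ring.inverse (2 : R) * y) 0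
      (Ring.inverse (2 : R) * y) 0
    rw [sub_zero] at h₃
    set b := a + Ring.inverse (2 : R) * y with hb
    have e1 := hrefl a (a - x) h₁
    rw [sub_sub_cancel] at e1
    set u := a + (a - x) with hu
    have hbu : IsUnit (b - u) := by
      have h : b - u = -(a - (x + Ring.inverse (2 : R) * y)) := by rw [hb, hu]; abel
      rw [h]; exact h₂.neg
    have e2 := hrefl b (b - u) hbu
    rw [sub_sub_cancel] at e2
    have hbb : b + (b - u) = x + y := by
      calc b + (b - u) = x + (Ring.inverse (2 : R) * y + Ring.inverse (2 : R) * y) := by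
            rw [hb, hu]; abel
        _ = x + y := by rw [hy2]
    rw [hbb] at e2
    have e3 := hrefl a a h₃
    rw [sub_self] at e3
    have hb2a : IsUnit (b - (a + a)) := by
      have h : b - (a + a) = -(a - Ring.inverse (2 : R) * y) := by rw [hb]; abel
      rw [h]; exact h₄.neg
    have e4 := hrefl b (b - (a + a)) hb2a
    rw [sub_sub_cancel] at e4
    have hbb0 : b + (b - (a + a)) = y := by
      calc b + (b - (a + a)) = Ring.inverse (2 : R) * y + Ring.inverse (2 : R) * y := by
            rw [hb]; abel
        _ = y := hy2
    rw [hbb0] at e4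
    have hu' : β u = β a + β a - β x := eq_sub_of_add_eq e1
    have h2a : β (a + a) = β a + β a - β 0 := eq_sub_of_add_eq e3
    have hy' : β y = β b + β b - β (a + a) := eq_sub_of_add_eq e4
    have hxy' : β (x + y) = β b + β b - β u := eq_sub_of_add_eq e2
    rw [hxy', hu', hy', h2a, β0]
    abel
  refine ⟨β, hβ, ?_, hadd, β1, fifth⟩
  intro γ hγ
  funext x
  exact inj _ _ (by rw [← hγ x, hβ x])
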